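/- arXiv:2605.11949 — 3 statements merged into one kernel-verified Lean document; each statement's English description precedes it below -/
import Mathlib

section
/- Let H be a tk-uniform hypergraph (t ≥ 2, k ≥ 2) such that: (a) any two distinct edges of H intersect in at most k vertices, and (b) H is (ℓ·tk - (ℓ-1)k - 1, ℓ)-free for all 2 ≤ ℓ ≤ 2t+2. Suppose there exist distinct subfamilies 𝒜, ℬ ⊆ H with |𝒜| = |ℬ| = t+1 and ∪𝒜 = ∪ℬ, and let p = |𝒜 ∩ ℬ|. Then p ≥ t - 1/(t-1), i.e., either p = t, or t = 2 and p = 1. -/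
/-- Let `H` be a `tk`-uniform hypergraph such that any two distinct edges intersect
in at most `k` vertices and `H` is `(ℓ·tk - (ℓ-1)k - 1, ℓ)`-free for all
`2 ≤ ℓ ≤ 2t+2`. If `𝒜 ≠ ℬ` are subfamilies of `H` of size `t+1` each with equal
unions, and `p = |𝒜 ∩ ℬ|`, then either `p = t`, or `t = 2` and `p = 1`. -/
theorem intersection_size_bound {V : Type*} [DecidableEq V]
    (H : Finset (Finset V)) (t k : ℕ) (ht : 2 ≤ t) (hk : 2 ≤ k)
    (huniform : ∀ A ∈ H, A.card = t * k)
    (hint : ∀ A ∈ H, ∀ B ∈ H, A ≠ B → (A ∩ B).card ≤ k)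
    (hfree : ∀ ℓ : ℕ, 2 ≤ ℓ → ℓ ≤ 2 * t + 2 → ∀ S ⊆ H, S.card = ℓ →
      ℓ * (t * k) - (ℓ - 1) * k ≤ (S.sup id).card)
    (𝒜 ℬ : Finset (Finset V)) (h𝒜 : 𝒜 ⊆ H) (hℬ : ℬ ⊆ H)
    (hne : 𝒜 ≠ ℬ) (hcard𝒜 : 𝒜.card = t + 1) (hcardℬ : ℬ.card = t + 1)
    (hunion : 𝒜.sup id = ℬ.sup id) :
    (𝒜 ∩ ℬ).card = t ∨ (t = 2 ∧ (𝒜 ∩ ℬ).card = 1) := by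
  set p := (𝒜 ∩ ℬ).card with hp
  have hpt : p ≤ t := by
    by_contra hlt
    push_neg at hlt
    have h1 : 𝒜 ∩ ℬ = 𝒜 := Finset.eq_of_subset_of_card_le Finset.inter_subset_left
      (by omega)
    have h2 : 𝒜 ⊆ ℬ := by rw [← h1]; exact Finset.inter_subset_right
    exact hne (Finset.eq_of_subset_of_card_le h2 (by omega))
  have hScard : (𝒜 ∪ ℬ).card = 2 * t + 2 - p := by
    have := Finset.card_union_add_card_inter 𝒜 ℬ
    omega
  have hlow := hfree (2 * t + 2 - p) (by omega) (by omega) (𝒜 ∪ ℬ)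
    (Finset.union_subset h𝒜 hℬ) hScard
  have hsup : (𝒜 ∪ ℬ).sup id = 𝒜.sup id := by
    rw [Finset.sup_union, hunion, sup_idem]
  rw [hsup] at hlow
  have hup : (𝒜.sup id).card ≤ (t + 1) * (t * k) := by
    calc (𝒜.sup id).card = (𝒜.biUnion id).card := by rw [Finset.sup_eq_biUnion]
      _ ≤ ∑ A ∈ 𝒜, (id A).card := Finset.card_biUnion_le
      _ = ∑ A ∈ 𝒜, A.card := by simp
      _ = (t + 1) * (t * k) := by
          rw [Finset.sum_congr rfl (fun A hA => huniform A (h𝒜 hA)),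
            Finset.sum_const, hcard𝒜, smul_eq_mul]
  have key : (2 * t + 2 - p) * (t * k) ≤ (t + 1) * (t * k) + (2 * t + 2 - p - 1) * k := by
    have := Nat.sub_le_iff_le_add.mp hlow
    omega
  have h1 : p ≤ 2 * t + 2 := by omega
  have h2 : 1 ≤ 2 * t + 2 - p := by omega
  zify [h1, h2] at key
  -- divide by k
  have hdiv : ((t : ℤ) + 1 - p) * t ≤ 2 * t + 1 - p := by
    have hK : (0 : ℤ) < k := by positivity
    have : (((t : ℤ) + 1 - p) * t) * k ≤ (2 * (t : ℤ) + 1 - p) * k := by nlinarith [key]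
    exact le_of_mul_le_mul_right this hK
  by_cases hpe : p = t
  · exact Or.inl hpe
  · right
    have hplt : (p : ℤ) + 1 ≤ t := by
      have : p < t := lt_of_le_of_ne hpt hpe
      exact_mod_cast this
    have ht2 : t = 2 := by
      have h3 : (0 : ℤ) ≤ ((t : ℤ) + 1 - p - 2) * ((t : ℤ) - 1) :=
        mul_nonneg (by linarith) (by push_cast; omega)
      have : (t : ℤ) ≤ 2 := by nlinarith [hdiv, h3]
      omega
    refine ⟨ht2, ?_⟩
    subst ht2
    have : (1 : ℤ) ≤ p := by push_cast at hdiv; linarith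
    omega
end

section
/- Let H be a 2k-uniform hypergraph that is (3·2k - 2k - 1, 3)-free, i.e., any 3 distinct edges have union of size at least 4k. If C, A, B are three distinct edges of H with the symmetric difference A Δ B contained in C ∪ D for some edge D, |A ∩ B| = k (so |A Δ B| = 2k), and |D ∩ (A Δ B)| ≤ k - 1, then |C ∩ (A Δ B)| ≥ k+1, and consequently |C ∪ A ∪ B| ≤ 4k - 1, contradicting the freeness. Formally: under these hypotheses, no such configuration exists. -/
/-- If `|A| = |B| = |C| = 2k`, `|A ∩ B| = k`, `A Δ B ⊆ C ∪ D`, and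
`|D ∩ (A Δ B)| ≤ k - 1`, then `|C ∪ A ∪ B| ≤ 4k - 1`. -/
theorem symmdiff_cover_bound {V : Type*} [DecidableEq V]
    (k : ℕ) (hk : 2 ≤ k) (A B C D : Finset V)
    (hA : A.card = 2 * k) (hB : B.card = 2 * k) (hC : C.card = 2 * k)
    (hAB : (A ∩ B).card = k)
    (hsub : symmDiff A B ⊆ C ∪ D)
    (hD : (D ∩ symmDiff A B).card ≤ k - 1) :
    (C ∪ A ∪ B).card ≤ 4 * k - 1 := by
  set S := symmDiff A B with hS
  have hUnion : (A ∪ B).card = 3 * k := by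
    have := Finset.card_union_add_card_inter A B
    omega
  have hSsub : S ⊆ A ∪ B := symmDiff_le_sup
  have hSint : A ∩ B ⊆ A ∪ B := Finset.inter_subset_left.trans Finset.subset_union_left
  have hScard : S.card = 2 * k := by
    have heq : S = (A ∪ B) \ (A ∩ B) := by
      rw [hS, symmDiff_eq_sup_sdiff_inf]; rfl
    rw [heq, Finset.card_sdiff_of_subset hSint, hUnion, hAB]
    omega
  have hcover : S ⊆ (C ∩ S) ∪ (D ∩ S) := by
    intro x hx
    rcases Finset.mem_union.mp (hsub hx) with h | h
    · exact Finset.mem_union_left _ (Finset.mem_inter.mpr ⟨h, hx⟩)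
    · exact Finset.mem_union_right _ (Finset.mem_inter.mpr ⟨h, hx⟩)
  have hCS : k + 1 ≤ (C ∩ S).card := by
    have h1 := Finset.card_le_card hcover
    have h2 := Finset.card_union_le (C ∩ S) (D ∩ S)
    omega
  have hCSsub : C ∩ S ⊆ C ∩ (A ∪ B) :=
    Finset.inter_subset_inter_left hSsub
  have hCAB : k + 1 ≤ (C ∩ (A ∪ B)).card := hCS.trans (Finset.card_le_card hCSsub)
  have h3 := Finset.card_union_add_card_inter C (A ∪ B)
  rw [Finset.union_assoc]
  omega
end

section
/- Let H be a 2k-uniform hypergraph on a finite vertex set such that H is (6k-1, 5)-free (any 5 distinct edges have union of size ≥ 6k) and (5k-1, 4)-free (any 4 distinct edges have union of size ≥ 5k). Then there do not exist five distinct edges C, A1, A2, B1, B2 of H with C ∪ A1 ∪ A2 = C ∪ B1 ∪ B2. -/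
/-- Let `H` be a `2k`-uniform hypergraph which is `(6k-1,5)`-free (any 5 distinct
edges have union of size at least `6k`) and `(5k-1,4)`-free (any 4 distinct edges
have union of size at least `5k`). Then there are no five distinct edges
`C, A1, A2, B1, B2` of `H` with `C ∪ A1 ∪ A2 = C ∪ B1 ∪ B2`. -/
theorem no_case2_configuration {V : Type*} [DecidableEq V]
    (H : Finset (Finset V)) (k : ℕ) (hk : 2 ≤ k)
    (huniform : ∀ A ∈ H, A.card = 2 * k)
    (hfree5 : ∀ S ⊆ H, S.card = 5 → 6 * k ≤ (S.sup id).card)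
    (hfree4 : ∀ S ⊆ H, S.card = 4 → 5 * k ≤ (S.sup id).card) :
    ¬ ∃ C A1 A2 B1 B2 : Finset V, C ∈ H ∧ A1 ∈ H ∧ A2 ∈ H ∧ B1 ∈ H ∧ B2 ∈ H ∧
      ({C, A1, A2, B1, B2} : Finset (Finset V)).card = 5 ∧
      C ∪ A1 ∪ A2 = C ∪ B1 ∪ B2 := by
  rintro ⟨C, A1, A2, B1, B2, hC, hA1, hA2, hB1, hB2, hcard, heq⟩
  have hCc := huniform C hC
  have hA1c := huniform A1 hA1
  have hA2c := huniform A2 hA2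
  have hB1c := huniform B1 hB1
  have hB2c := huniform B2 hB2
  set S : Finset (Finset V) := {C, A1, A2, B1, B2} with hS
  have hSsub : S ⊆ H := by
    intro x hx
    simp only [hS, Finset.mem_insert, Finset.mem_singleton] at hx
    rcases hx with h | h | h | h | h <;> subst h <;> assumption
  have h5 := hfree5 S hSsub hcard
  have hsup : S.sup id = C ∪ A1 ∪ A2 := by
    have h1 : S.sup id = C ∪ (A1 ∪ (A2 ∪ (B1 ∪ B2))) := by
      simp [hS, Finset.sup_insert]
    rw [h1]
    ext x
    have hx : x ∈ C ∪ A1 ∪ A2 ↔ x ∈ C ∪ B1 ∪ B2 := by rw [heq]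
    simp only [Finset.mem_union] at hx ⊢
    constructor
    · rintro (h | h | h | h | h)
      · exact Or.inl (Or.inl h)
      · exact Or.inl (Or.inr h)
      · exact Or.inr h
      · exact hx.mpr (Or.inl (Or.inr h))
      · exact hx.mpr (Or.inr h)
    · rintro ((h | h) | h)
      · exact Or.inl h
      · exact Or.inr (Or.inl h)
      · exact Or.inr (Or.inr (Or.inl h))
  rw [hsup] at h5
  -- upper bound: |C ∪ A1 ∪ A2| ≤ 6k
  have hub : (C ∪ A1 ∪ A2).card ≤ 6 * k := by
    calc (C ∪ A1 ∪ A2).card ≤ (C ∪ A1).card + A2.card := Finset.card_union_le _ _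
      _ ≤ C.card + A1.card + A2.card := by
          have := Finset.card_union_le C A1; omega
      _ = 6 * k := by omega
  have hUcard : (C ∪ A1 ∪ A2).card = 6 * k := le_antisymm hub h5
  -- C is disjoint from A1 ∪ A2, and |A1 ∪ A2| = 4k
  have keyA : (C ∩ (A1 ∪ A2)).card = 0 ∧ (A1 ∪ A2).card = 4 * k := by
    have h2 : (C ∪ (A1 ∪ A2)).card + (C ∩ (A1 ∪ A2)).card = C.card + (A1 ∪ A2).card :=
      Finset.card_union_add_card_inter _ _
    have h3 : (A1 ∪ A2).card ≤ A1.card + A2.card := Finset.card_union_le _ _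
    have h4 : C ∪ (A1 ∪ A2) = C ∪ A1 ∪ A2 := (Finset.union_assoc _ _ _).symm
    rw [h4, hUcard] at h2
    omega
  have keyB : (C ∩ (B1 ∪ B2)).card = 0 := by
    have h2 : (C ∪ (B1 ∪ B2)).card + (C ∩ (B1 ∪ B2)).card = C.card + (B1 ∪ B2).card :=
      Finset.card_union_add_card_inter _ _
    have h3 : (B1 ∪ B2).card ≤ B1.card + B2.card := Finset.card_union_le _ _
    have h4 : C ∪ (B1 ∪ B2) = C ∪ B1 ∪ B2 := (Finset.union_assoc _ _ _).symm
    rw [h4, ← heq, hUcard] at h2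
    omega
  have hdisjA : ∀ x, x ∈ C → x ∈ A1 ∪ A2 → False := by
    intro x hx1 hx2
    have hm : x ∈ C ∩ (A1 ∪ A2) := Finset.mem_inter.mpr ⟨hx1, hx2⟩
    rw [Finset.card_eq_zero.mp keyA.1] at hm
    exact Finset.notMem_empty x hm
  have hdisjB : ∀ x, x ∈ C → x ∈ B1 ∪ B2 → False := by
    intro x hx1 hx2
    have h0 := Finset.card_eq_zero.mp keyB
    have : x ∈ C ∩ (B1 ∪ B2) := Finset.mem_inter.mpr ⟨hx1, hx2⟩
    rw [h0] at this
    exact absurd this (Finset.notMem_empty x)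
  -- hence A1 ∪ A2 = B1 ∪ B2
  have hAB : A1 ∪ A2 = B1 ∪ B2 := by
    ext x
    constructor
    · intro hx
      have : x ∈ C ∪ B1 ∪ B2 := by
        rw [← heq]
        simp only [Finset.mem_union] at hx ⊢; tauto
      simp only [Finset.mem_union] at this
      rcases this with (h | h) | h
      · exact absurd hx (fun hx => hdisjA x h hx)
      · simp [h]
      · simp [h]
    · intro hx
      have : x ∈ C ∪ A1 ∪ A2 := by
        rw [heq]
        simp only [Finset.mem_union] at hx ⊢; tauto
      simp only [Finset.mem_union] at this
      rcases this with (h | h) | h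
      · exact absurd hx (fun hx => hdisjB x h hx)
      · simp [h]
      · simp [h]
  -- the four edges A1, A2, B1, B2 are distinct
  set T : Finset (Finset V) := {A1, A2, B1, B2} with hT
  have hTcard : T.card = 4 := by
    have hle : T.card ≤ 4 := by
      apply le_trans (Finset.card_insert_le _ _)
      apply Nat.succ_le_succ
      apply le_trans (Finset.card_insert_le _ _)
      apply Nat.succ_le_succ
      exact le_trans (Finset.card_insert_le _ _) (by simp)
    have hge : 4 ≤ T.card := by
      have : S = insert C T := rfl
      have h1 : S.card ≤ T.card + 1 := by rw [this]; exact Finset.card_insert_le _ _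
      omega
    omega
  have hTsub : T ⊆ H := by
    intro x hx
    simp only [hT, Finset.mem_insert, Finset.mem_singleton] at hx
    rcases hx with h | h | h | h <;> subst h <;> assumption
  have h4 := hfree4 T hTsub hTcard
  have hTsup : T.sup id = A1 ∪ A2 := by
    have h1 : T.sup id = A1 ∪ (A2 ∪ (B1 ∪ B2)) := by
      simp [hT, Finset.sup_insert]
    rw [h1, ← hAB]
    ext x; simp only [Finset.mem_union]; tauto
  rw [hTsup, keyA.2] at h4
  omega
end
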